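/- Let k ≥ 1 be an integer and s > 1 a real number, and let f(x) = (x^{1/k}·(x + (1-x)·(1 - 1/s)) + (1-x)·(1/s))^k be the BSBF iteration map. Then x = 1 is the unique fixed point of f in [0,1]: for every real x with 0 ≤ x ≤ 1, f(x) = x if and only if x = 1. -/

import Mathlib

/-- **BSBF unique fixed point.** For the BSBF iteration map
`f x = (x^(1/k) * (x + (1-x)*(1 - 1/s)) + (1-x)*(1/s))^k` with `k ≥ 1` and `s > 1`,
`x = 1` is the unique fixed point of `f` in `[0,1]`. -/
theorem bsbf_unique_fixed_point (k : ℕ) (hk : 1 ≤ k) (s : ℝ) (hs : 1 < s)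
    (f : ℝ → ℝ)
    (hf : ∀ x : ℝ,
      f x = (x ^ ((1 : ℝ) / k) * (x + (1 - x) * (1 - 1 / s)) + (1 - x) * (1 / s)) ^ k) :
    ∀ x : ℝ, 0 ≤ x → x ≤ 1 → (f x = x ↔ x = 1) := by
  intro x hx0 hx1
  have hk0 : (k : ℝ) ≠ 0 := Nat.cast_ne_zero.mpr (by omega)
  have hs0 : s ≠ 0 := by linarith
  set t : ℝ := x ^ ((1 : ℝ) / k) with ht
  have ht0 : 0 ≤ t := Real.rpow_nonneg hx0 _
  have ht1 : t ≤ 1 := Real.rpow_le_one hx0 hx1 (by positivity)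
  have htk : t ^ k = x := by
    rw [ht, ← Real.rpow_natCast (x ^ ((1:ℝ)/k)) k, ← Real.rpow_mul hx0]
    rw [one_div_mul_cancel hk0, Real.rpow_one]
  have hinner : t * (x + (1 - x) * (1 - 1 / s)) + (1 - x) * (1 / s)
      = t + (1 - x) * (1 - t) / s := by
    field_simp
    ring
  constructor
  · intro hfx
    rw [hf x, hinner] at hfx
    have hnn : 0 ≤ t + (1 - x) * (1 - t) / s := by
      have : 0 ≤ (1 - x) * (1 - t) / s := by
        apply div_nonneg _ (by linarith)
        exact mul_nonneg (by linarith) (by linarith)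
      linarith
    have heq : t + (1 - x) * (1 - t) / s = t := by
      nth_rewrite 2 [← htk] at hfx
      exact (pow_left_strictMonoOn₀ (by omega : k ≠ 0)).injOn hnn ht0 hfx
    have hzero : (1 - x) * (1 - t) = 0 := by
      have : (1 - x) * (1 - t) / s = 0 := by linarith
      field_simp at this
      linarith
    rcases mul_eq_zero.mp hzero with h | h
    · linarith
    · have : t = 1 := by linarith
      rw [← htk, this, one_pow]
  · rintro rfl
    rw [hf 1]
    simp
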